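/- Let (X,d) be a p-uniformly convex space with parameter c and T₁, T₂ : X → X firmly nonexpansive with a common fixed point u. Take x₀ ∈ X with d(x₀, u) ≤ b, and define x_{n+1} = T_{n(mod 2)+1} x_n. Then for every ε with 0 < ε < 2b and every n ≥ 2·⌊(2/c)·(4p·b^p/(c·ε^p))^p⌋, one has d(x_n, x_{n+1}) ≤ ε. In particular the map ε ↦ θ(ε) = 2⌊(2/c)(4pb^p/(cε^p))^p⌋ (and 0 for ε ≥ 2b) is an explicit polynomial rate of asymptotic regularity. -/

import Mathlib

open Filter Topology Metric Set
open NNReal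

/-- A (chosen) geodesic bicombing witnessing that `X` is a geodesic space:
`geo x y t` is the point at parameter fraction `t ∈ [0,1]` on a geodesic from `x` to `y`. -/
structure Geodesic (X : Type*) [MetricSpace X] where
  geo : X → X → ℝ → X
  geo_zero : ∀ x y, geo x y 0 = x
  geo_one : ∀ x y, geo x y 1 = y
  geo_dist : ∀ x y : X, ∀ s ∈ Set.Icc (0:ℝ) 1, ∀ t ∈ Set.Icc (0:ℝ) 1,
    dist (geo x y s) (geo x y t) = |s - t| * dist x y

def PUnifConvex {X : Type*} [MetricSpace X] (G : Geodesic X) (p c : ℝ) : Prop :=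
  ∀ x y z : X, ∀ t ∈ Set.Icc (0:ℝ) 1,
    dist z (G.geo x y t) ^ p ≤ (1 - t) * dist z x ^ p + t * dist z y ^ p
      - c / 2 * (t * (1 - t)) * dist x y ^ p

def FirmlyNonexpansive {X : Type*} [MetricSpace X] (G : Geodesic X) (T : X → X) : Prop :=
  ∀ x y : X, ∀ lam ∈ Set.Ico (0:ℝ) 1,
    dist (T x) (T y) ≤ dist (G.geo x (T x) lam) (G.geo y (T y) lam)

lemma aux_geo_self {X : Type*} [MetricSpace X] (G : Geodesic X) (u : X) {t : ℝ}
    (ht : t ∈ Set.Icc (0:ℝ) 1) : G.geo u u t = u := by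
  have h := G.geo_dist u u t ht 0 ⟨le_refl 0, zero_le_one⟩
  rw [G.geo_zero] at h
  simp only [dist_self, mul_zero] at h
  exact dist_eq_zero.mp h

lemma aux_nonexp {X : Type*} [MetricSpace X] {G : Geodesic X} {T : X → X}
    (h : FirmlyNonexpansive G T) (z w : X) : dist (T z) (T w) ≤ dist z w := by
  have := h z w 0 ⟨le_refl 0, zero_lt_one⟩
  rwa [G.geo_zero, G.geo_zero] at this

lemma aux_core {X : Type*} [MetricSpace X] {G : Geodesic X} {p c : ℝ} (hp : 1 < p) (hc : 0 < c)
    (hpc : PUnifConvex G p c) {T : X → X} (hT : FirmlyNonexpansive G T) {u : X} (hu : T u = u)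
    (z : X) : dist (T z) u ^ p + c / 2 * dist z (T z) ^ p ≤ dist z u ^ p := by
  set A := dist (T z) u with hA
  set B := dist z u with hB
  set D := dist z (T z) with hD
  have key : ∀ lam ∈ Set.Ico (0:ℝ) 1, lam * (c / 2 * D ^ p) ≤ B ^ p - A ^ p := by
    intro lam hlam
    obtain ⟨h0, h1⟩ := hlam
    have hIcc : lam ∈ Set.Icc (0:ℝ) 1 := ⟨h0, le_of_lt h1⟩
    have h2 : dist (T z) (T u) ≤ dist (G.geo z (T z) lam) (G.geo u (T u) lam) :=
      hT z u lam ⟨h0, h1⟩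
    rw [hu, aux_geo_self G u hIcc] at h2
    have h3 : A ^ p ≤ dist u (G.geo z (T z) lam) ^ p := by
      rw [dist_comm u]
      exact Real.rpow_le_rpow dist_nonneg h2 (by linarith)
    have h4 := hpc z (T z) u lam hIcc
    rw [dist_comm u z, dist_comm u (T z)] at h4
    have h5 : (1 - lam) * (lam * (c / 2 * D ^ p)) ≤ (1 - lam) * (B ^ p - A ^ p) := by
      nlinarith [h3, h4]
    exact le_of_mul_le_mul_left h5 (by linarith)
  have hten : Tendsto (fun k : ℕ => (1 - 1 / ((k : ℝ) + 1)) * (c / 2 * D ^ p)) atTop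
      (𝓝 (c / 2 * D ^ p)) := by
    have t1 : Tendsto (fun k : ℕ => (1 : ℝ) - 1 / ((k : ℝ) + 1)) atTop (𝓝 1) := by
      simpa using tendsto_const_nhds.sub (tendsto_one_div_add_atTop_nhds_zero_nat (𝕜 := ℝ))
    simpa using t1.mul_const (c / 2 * D ^ p)
  have hlim : c / 2 * D ^ p ≤ B ^ p - A ^ p := by
    refine le_of_tendsto hten (Filter.Eventually.of_forall fun k => key _ ⟨?_, ?_⟩)
    · have hk : (0:ℝ) < (k : ℝ) + 1 := by positivity
      have : 1 / ((k : ℝ) + 1) ≤ 1 := by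
        rw [div_le_one hk]; linarith [Nat.cast_nonneg (α := ℝ) k]
      linarith
    · have : (0:ℝ) < 1 / ((k : ℝ) + 1) := by positivity
      linarith
  linarith

lemma aux_mvt {p b : ℝ} (hp : 1 ≤ p) (hb : 0 ≤ b) {α β : ℝ} (h0 : 0 ≤ β) (hβα : β ≤ α)
    (hαb : α ≤ b) : α ^ p - β ^ p ≤ p * b ^ (p - 1) * (α - β) := by
  have hmono : MonotoneOn (fun t : ℝ => p * b ^ (p - 1) * t - t ^ p) (Set.Icc 0 b) := by
    apply monotoneOn_of_deriv_nonneg (convex_Icc 0 b)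
    · exact ((continuous_const.mul continuous_id).sub
        (Real.continuous_rpow_const (by linarith))).continuousOn
    · intro t _
      exact (((differentiableAt_id.const_mul _).sub
        (Real.hasDerivAt_rpow_const (Or.inr hp)).differentiableAt)).differentiableWithinAt
    · intro t ht
      rw [interior_Icc] at ht
      have h1 : HasDerivAt (fun t : ℝ => t ^ p) (p * t ^ (p - 1)) t :=
        Real.hasDerivAt_rpow_const (Or.inr hp)
      have h2 : HasDerivAt (fun t : ℝ => p * b ^ (p - 1) * t - t ^ p)
          (p * b ^ (p - 1) * 1 - p * t ^ (p - 1)) t := ((hasDerivAt_id t).const_mul _).sub h1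
      rw [h2.deriv]
      have h3 : t ^ (p - 1) ≤ b ^ (p - 1) :=
        Real.rpow_le_rpow ht.1.le (le_of_lt ht.2) (by linarith)
      nlinarith [h3]
  have h := hmono (Set.mem_Icc.mpr ⟨h0, hβα.trans hαb⟩)
    (Set.mem_Icc.mpr ⟨h0.trans hβα, hαb⟩) hβα
  simp only at h
  linarith

lemma aux_two_rpow {p : ℝ} (hp : 1 ≤ p) {a b : ℝ} (ha : 0 ≤ a) (hb : 0 ≤ b) :
    (a + b) ^ p ≤ 2 ^ (p - 1) * (a ^ p + b ^ p) := by
  lift a to ℝ≥0 using ha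
  lift b to ℝ≥0 using hb
  have h := NNReal.rpow_add_le_mul_rpow_add_rpow a b hp
  have h2 := NNReal.coe_le_coe.mpr h
  push_cast at h2
  convert h2 using 3 <;> norm_num

/-- Explicit polynomial rate of asymptotic regularity for the alternating iteration of two
firmly nonexpansive mappings with a common fixed point in a `p`-uniformly convex space. -/
theorem rate_of_asymptotic_regularity {X : Type*} [MetricSpace X]
    (G : Geodesic X) (p c : ℝ) (hp : 1 < p) (hc : 0 < c)
    (hpc : PUnifConvex G p c)
    (T₁ T₂ : X → X) (hT₁ : FirmlyNonexpansive G T₁) (hT₂ : FirmlyNonexpansive G T₂)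
    (u : X) (hu₁ : T₁ u = u) (hu₂ : T₂ u = u)
    (x₀ : X) (b : ℝ) (hb : 0 < b) (hx₀ : dist x₀ u ≤ b)
    (x : ℕ → X) (hx0 : x 0 = x₀)
    (hx : ∀ n : ℕ, x (n + 1) = if n % 2 = 0 then T₁ (x n) else T₂ (x n)) :
    ∀ ε : ℝ, 0 < ε → ε < 2 * b → ∀ n : ℕ,
      (n : ℝ) ≥ 2 * (⌊(2 / c) * ((4 * p * b ^ p) / (c * ε ^ p)) ^ p⌋ : ℝ) →
      dist (x n) (x (n + 1)) ≤ ε := by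
  intro ε hε hεb n hn
  have hp0 : (0:ℝ) ≤ p := by linarith
  have hbp : (0:ℝ) < b ^ p := Real.rpow_pos_of_pos hb p
  have hεp : (0:ℝ) < ε ^ p := Real.rpow_pos_of_pos hε p
  set M : ℝ := (4 * p * b ^ p) / (c * ε ^ p) with hM
  have hM0 : 0 < M := by positivity
  -- basic step inequalities
  have hstep : ∀ m : ℕ, dist (x (m+1)) u ^ p + c / 2 * dist (x m) (x (m+1)) ^ p
      ≤ dist (x m) u ^ p := by
    intro m
    rw [hx m]
    split_ifs
    · exact aux_core hp hc hpc hT₁ hu₁ (x m)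
    · exact aux_core hp hc hpc hT₂ hu₂ (x m)
  have hanti : ∀ m : ℕ, dist (x (m+1)) u ≤ dist (x m) u := by
    intro m
    rw [hx m]
    split_ifs
    · calc dist (T₁ (x m)) u = dist (T₁ (x m)) (T₁ u) := by rw [hu₁]
        _ ≤ dist (x m) u := aux_nonexp hT₁ _ _
    · calc dist (T₂ (x m)) u = dist (T₂ (x m)) (T₂ u) := by rw [hu₂]
        _ ≤ dist (x m) u := aux_nonexp hT₂ _ _
  have hale : ∀ m : ℕ, dist (x m) u ≤ b := by
    intro m
    induction m with
    | zero => rw [hx0]; exact hx₀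
    | succ k ih => exact (hanti k).trans ih
  -- e is nonincreasing
  have hestep : ∀ m : ℕ, dist (x (m+1)) (x (m+1+2)) ≤ dist (x m) (x (m+2)) := by
    intro m
    have h2 : (m+2) % 2 = m % 2 := Nat.add_mod_right m 2
    have h3 : x (m+1+2) = if m % 2 = 0 then T₁ (x (m+2)) else T₂ (x (m+2)) := by
      rw [show m+1+2 = (m+2)+1 from by omega, hx (m+2), h2]
    rw [hx m, h3]
    split_ifs
    · exact aux_nonexp hT₁ _ _
    · exact aux_nonexp hT₂ _ _
  have hemono : ∀ m k : ℕ, m ≤ k → dist (x k) (x (k+2)) ≤ dist (x m) (x (m+2)) := by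
    intro m k hmk
    induction k, hmk using Nat.le_induction with
    | base => exact le_rfl
    | succ k _ ih => exact (hestep k).trans ih
  -- sum bound on d^p
  have hsum : ∀ m : ℕ, c / 2 * (∑ i ∈ Finset.range m, dist (x i) (x (i+1)) ^ p)
      ≤ dist (x 0) u ^ p - dist (x m) u ^ p := by
    intro m
    induction m with
    | zero => simp
    | succ k ih =>
      rw [Finset.sum_range_succ, mul_add]
      have := hstep k
      linarith
  have hsumb : ∀ m : ℕ, ∑ i ∈ Finset.range m, dist (x i) (x (i+1)) ^ p ≤ 2 / c * b ^ p := by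
    intro m
    have h1 := hsum m
    have h2 : dist (x 0) u ^ p ≤ b ^ p := Real.rpow_le_rpow dist_nonneg (hale 0) hp0
    have h3 : 0 ≤ dist (x m) u ^ p := Real.rpow_nonneg dist_nonneg p
    rw [div_mul_eq_mul_div, le_div_iff₀ hc]
    nlinarith [h1, h2, h3]
  -- double sum pairing
  have hdouble : ∀ (f : ℕ → ℝ) (m : ℕ),
      ∑ j ∈ Finset.range m, (f (2*j) + f (2*j+1)) = ∑ i ∈ Finset.range (2*m), f i := by
    intro f m
    induction m with
    | zero => simp
    | succ k ih =>
      rw [Finset.sum_range_succ, ih, show 2*(k+1) = 2*k+1+1 from by ring,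
        Finset.sum_range_succ, Finset.sum_range_succ]
      ring
  -- key bound on e(2k)^p
  have heb : ∀ k : ℕ, ((k:ℝ)+1) * dist (x (2*k)) (x (2*k+2)) ^ p
      ≤ 2 ^ (p-1) * (2 / c * b ^ p) := by
    intro k
    have hcard : ((k:ℝ)+1) * dist (x (2*k)) (x (2*k+2)) ^ p
        ≤ ∑ j ∈ Finset.range (k+1), dist (x (2*j)) (x (2*j+2)) ^ p := by
      have h := Finset.card_nsmul_le_sum (Finset.range (k+1))
        (fun j => dist (x (2*j)) (x (2*j+2)) ^ p) (dist (x (2*k)) (x (2*k+2)) ^ p) ?_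
      · rw [Finset.card_range] at h
        calc ((k:ℝ)+1) * dist (x (2*k)) (x (2*k+2)) ^ p
            = (k+1 : ℕ) • dist (x (2*k)) (x (2*k+2)) ^ p := by
              rw [nsmul_eq_mul]; push_cast; ring
          _ ≤ _ := h
      · intro j hj
        have hjk : j ≤ k := by simpa using Nat.lt_succ_iff.mp (Finset.mem_range.mp hj)
        exact Real.rpow_le_rpow dist_nonneg
          (hemono (2*j) (2*k) (by omega)) hp0
    have hterm : ∀ j : ℕ, dist (x (2*j)) (x (2*j+2)) ^ p
        ≤ 2 ^ (p-1) * (dist (x (2*j)) (x (2*j+1)) ^ p + dist (x (2*j+1)) (x (2*j+1+1)) ^ p) := by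
      intro j
      have htri : dist (x (2*j)) (x (2*j+2)) ≤
          dist (x (2*j)) (x (2*j+1)) + dist (x (2*j+1)) (x (2*j+1+1)) := by
        rw [show 2*j+1+1 = 2*j+2 from by omega]
        exact dist_triangle _ _ _
      calc dist (x (2*j)) (x (2*j+2)) ^ p
          ≤ (dist (x (2*j)) (x (2*j+1)) + dist (x (2*j+1)) (x (2*j+1+1))) ^ p :=
            Real.rpow_le_rpow dist_nonneg htri hp0
        _ ≤ _ := aux_two_rpow hp.le dist_nonneg dist_nonneg
    calc ((k:ℝ)+1) * dist (x (2*k)) (x (2*k+2)) ^ p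
        ≤ ∑ j ∈ Finset.range (k+1), dist (x (2*j)) (x (2*j+2)) ^ p := hcard
      _ ≤ ∑ j ∈ Finset.range (k+1), 2 ^ (p-1) * (dist (x (2*j)) (x (2*j+1)) ^ p
            + dist (x (2*j+1)) (x (2*j+1+1)) ^ p) :=
          Finset.sum_le_sum fun j _ => hterm j
      _ = 2 ^ (p-1) * ∑ j ∈ Finset.range (k+1), (dist (x (2*j)) (x (2*j+1)) ^ p
            + dist (x (2*j+1)) (x (2*j+1+1)) ^ p) := by rw [Finset.mul_sum]
      _ = 2 ^ (p-1) * ∑ i ∈ Finset.range (2*(k+1)), dist (x i) (x (i+1)) ^ p := by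
          rw [hdouble (fun i => dist (x i) (x (i+1)) ^ p) (k+1)]
      _ ≤ 2 ^ (p-1) * (2 / c * b ^ p) := by
          have := hsumb (2*(k+1))
          have h2 : (0:ℝ) ≤ 2 ^ (p-1) := Real.rpow_nonneg (by norm_num) _
          exact mul_le_mul_of_nonneg_left this h2
  -- floor arithmetic
  set K : ℕ := n / 2 with hK
  set N : ℤ := ⌊2 / c * M ^ p⌋ with hN
  have hMp0 : (0:ℝ) < M ^ p := Real.rpow_pos_of_pos hM0 p
  have h2N : 2 * N ≤ (n:ℤ) := by
    have : ((2 * N : ℤ) : ℝ) ≤ (n:ℝ) := by push_cast; linarith [hn]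
    exact_mod_cast this
  have hNK : N ≤ (K:ℤ) := by omega
  have hcK : M ^ p ≤ c * ((K:ℝ) + 1) := by
    have hfl : 2 / c * M ^ p < (N:ℝ) + 1 := Int.lt_floor_add_one _
    have hNKr : (N:ℝ) ≤ (K:ℝ) := by exact_mod_cast hNK
    have h2 : 2 / c * M ^ p < (K:ℝ) + 1 := by linarith
    have h3 : c * (2 / c * M ^ p) < c * ((K:ℝ) + 1) := (mul_lt_mul_iff_right₀ hc).mpr h2
    rw [show c * (2 / c * M ^ p) = 2 * M ^ p from by field_simp] at h3
    linarith
  -- bound on e n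
  have hen : dist (x n) (x (n+2)) ≤ 2 * b / M := by
    have h1 : dist (x n) (x (n+2)) ≤ dist (x (2*K)) (x (2*K+2)) :=
      hemono (2*K) n (by omega)
    have h2 : dist (x n) (x (n+2)) ^ p ≤ dist (x (2*K)) (x (2*K+2)) ^ p :=
      Real.rpow_le_rpow dist_nonneg h1 hp0
    have h3 : ((K:ℝ)+1) * dist (x n) (x (n+2)) ^ p ≤ 2 ^ (p-1) * (2 / c * b ^ p) := by
      have hK1 : (0:ℝ) < (K:ℝ) + 1 := by positivity
      calc ((K:ℝ)+1) * dist (x n) (x (n+2)) ^ p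
          ≤ ((K:ℝ)+1) * dist (x (2*K)) (x (2*K+2)) ^ p :=
            mul_le_mul_of_nonneg_left h2 hK1.le
        _ ≤ 2 ^ (p-1) * (2 / c * b ^ p) := heb K
    have hrhs : 2 ^ (p-1) * (2 / c * b ^ p) = (2 * b) ^ p / c := by
      rw [Real.mul_rpow (by norm_num) hb.le, Real.rpow_sub (by norm_num : (0:ℝ) < 2) p 1,
        Real.rpow_one]
      field_simp
    rw [hrhs] at h3
    have hK1 : (0:ℝ) < (K:ℝ) + 1 := by positivity
    have h4 : dist (x n) (x (n+2)) ^ p ≤ (2 * b) ^ p / (c * ((K:ℝ)+1)) := by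
      rw [show (2*b)^p / (c*((K:ℝ)+1)) = (2*b)^p / c / ((K:ℝ)+1) from (div_div _ _ _).symm,
        le_div_iff₀ hK1]
      linarith [h3]
    have h5 : dist (x n) (x (n+2)) ^ p ≤ (2 * b) ^ p / M ^ p := by
      calc dist (x n) (x (n+2)) ^ p ≤ (2 * b) ^ p / (c * ((K:ℝ)+1)) := h4
        _ ≤ (2 * b) ^ p / M ^ p :=
            div_le_div_of_nonneg_left (by positivity) hMp0 hcK
    have h6 : (2 * b) ^ p / M ^ p = (2 * b / M) ^ p := by
      rw [Real.div_rpow (by positivity) hM0.le]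
    rw [h6] at h5
    exact (Real.rpow_le_rpow_iff dist_nonneg (by positivity) (by linarith)).mp h5
  -- final chain
  have h1 : c / 2 * dist (x n) (x (n+1)) ^ p
      ≤ dist (x n) u ^ p - dist (x (n+1)) u ^ p := by linarith [hstep n]
  have h2 : dist (x (n+2)) u ^ p ≤ dist (x (n+1)) u ^ p := by
    apply Real.rpow_le_rpow dist_nonneg _ hp0
    have := hanti (n+1)
    rwa [show n+1+1 = n+2 from by omega] at this
  have h3 : dist (x n) u - dist (x (n+2)) u ≤ dist (x n) (x (n+2)) :=
    le_trans (le_abs_self _) (abs_dist_sub_le _ _ _)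
  have h4 : dist (x n) u ^ p - dist (x (n+2)) u ^ p
      ≤ p * b ^ (p-1) * (dist (x n) u - dist (x (n+2)) u) := by
    apply aux_mvt hp.le hb.le dist_nonneg _ (hale n)
    calc dist (x (n+2)) u ≤ dist (x (n+1)) u := by
          have := hanti (n+1); rwa [show n+1+1 = n+2 from by omega] at this
      _ ≤ dist (x n) u := hanti n
  have hpb : (0:ℝ) ≤ p * b ^ (p-1) := by positivity
  have h5 : p * b ^ (p-1) * (dist (x n) u - dist (x (n+2)) u)
      ≤ p * b ^ (p-1) * (2 * b / M) :=
    mul_le_mul_of_nonneg_left (h3.trans hen) hpb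
  have h8 : p * b ^ (p-1) * (2 * b / M) = c / 2 * ε ^ p := by
    have hbb : b ^ (p-1) * b = b ^ p := by
      rw [← Real.rpow_add_one hb.ne' (p-1)]
      norm_num
    rw [hM]
    rw [show p * b ^ (p-1) * (2 * b / ((4 * p * b ^ p) / (c * ε ^ p)))
        = 2 * p * (b ^ (p-1) * b) * (c * ε ^ p) / (4 * p * b ^ p) from by
      field_simp]
    rw [hbb]
    field_simp
    ring
  have h9 : c / 2 * dist (x n) (x (n+1)) ^ p ≤ c / 2 * ε ^ p := by
    rw [← h8]; linarith
  have h10 : dist (x n) (x (n+1)) ^ p ≤ ε ^ p :=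
    le_of_mul_le_mul_left (by linarith) (by linarith : (0:ℝ) < c / 2)
  exact (Real.rpow_le_rpow_iff dist_nonneg hε.le (by linarith)).mp h10
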